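/- For each n ∈ ℕ* let xₙ : ℝ₊ → (1/(2n+1), 1/(2n)) be decreasing with lim_{t→∞} xₙ(t) = 1/(2n+1), and let X be the closure of all translates of the xₙ. The skew-evolution semiflow on X × ℝ³ with Ψ(t,t₀,x)(v₁,v₂,v₃) = (e^{−∫_{t₀}^t x(s)ds}v₁, e^{∫_{t₀}^t x(s)ds}v₂, e^{∫_{t₀}^t x(s)ds}v₃) and projections P₁(v)=(v₁,0,0), P₂(v)=(0,v₂,0), P₀(v)=(0,0,v₃) is NOT globally uniformly exponentially trichotomic with these projections, but it IS pointwise uniformly exponentially trichotomic at every point x ∈ X (with constant projection families P̃ₖ(t) = Pₖ). -/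

import Mathlib

open Real Filter

/-- The ℓ¹ norm on ℝ³. -/
def nrm (v : Fin 3 → ℝ) : ℝ := |v 0| + |v 1| + |v 2|

/-- The cocycle of the counterexample:
`Ψ(t,t₀,x)v = (e^{−∫x}v₁, e^{∫x}v₂, e^{∫x}v₃)`. -/
noncomputable def coc (x : ℝ → ℝ) (t t₀ : ℝ) (v : Fin 3 → ℝ) : Fin 3 → ℝ :=
  ![Real.exp (-(∫ s in t₀..t, x s)) * v 0,
    Real.exp (∫ s in t₀..t, x s) * v 1,
    Real.exp (∫ s in t₀..t, x s) * v 2]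

def proj1 (v : Fin 3 → ℝ) : Fin 3 → ℝ := ![v 0, 0, 0]
def proj2 (v : Fin 3 → ℝ) : Fin 3 → ℝ := ![0, v 1, 0]
def proj0 (v : Fin 3 → ℝ) : Fin 3 → ℝ := ![0, 0, v 2]

/-- The semiflow of the counterexample: translation. -/
def orbitTranslate (x : ℝ → ℝ) (t s : ℝ) : ℝ → ℝ := fun τ => x (t - s + τ)

section Helpers

open MeasureTheory

lemma intg {x : ℝ → ℝ} (hm : AntitoneOn x (Set.Ici 0)) {c d : ℝ}
    (hc : 0 ≤ c) (hd : 0 ≤ d) : IntervalIntegrable x volume c d :=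
  (hm.mono (fun _ hw => le_trans (le_min hc hd) hw.1)).intervalIntegrable

lemma int_le_const {x : ℝ → ℝ} (hm : AntitoneOn x (Set.Ici 0)) {b c d : ℝ}
    (hxb : ∀ s, 0 ≤ s → x s ≤ b) (hc : 0 ≤ c) (hcd : c ≤ d) :
    (∫ w in c..d, x w) ≤ b * (d - c) := by
  have h := intervalIntegral.integral_mono_on hcd (intg hm hc (hc.trans hcd))
    intervalIntegrable_const (g := fun _ => b) (fun w hw => hxb w (hc.trans hw.1))
  simpa [intervalIntegral.integral_const, smul_eq_mul, mul_comm] using h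

lemma const_le_int {x : ℝ → ℝ} (hm : AntitoneOn x (Set.Ici 0)) {a c d : ℝ}
    (hxa : ∀ s, 0 ≤ s → a ≤ x s) (hc : 0 ≤ c) (hcd : c ≤ d) :
    a * (d - c) ≤ ∫ w in c..d, x w := by
  have h := intervalIntegral.integral_mono_on hcd intervalIntegrable_const
    (intg hm hc (hc.trans hcd)) (f := fun _ => a) (fun w hw => hxa w (hc.trans hw.1))
  simpa [intervalIntegral.integral_const, smul_eq_mul, mul_comm] using h

lemma shift_le {x : ℝ → ℝ} (hm : AntitoneOn x (Set.Ici 0)) {c d Δ : ℝ}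
    (hc : 0 ≤ c) (hcd : c ≤ d) (hΔ : 0 ≤ Δ) :
    (∫ w in (c+Δ)..(d+Δ), x w) ≤ ∫ w in c..d, x w := by
  rw [← intervalIntegral.integral_comp_add_right]
  have hint : AntitoneOn (fun w => x (w + Δ)) (Set.uIcc c d) := by
    intro w1 h1 w2 h2 h12
    have hw1 : (0:ℝ) ≤ w1 := le_trans (le_min hc (hc.trans hcd)) h1.1
    have hw2 : (0:ℝ) ≤ w2 := le_trans (le_min hc (hc.trans hcd)) h2.1
    exact hm (by simpa using by linarith : w1 + Δ ∈ Set.Ici (0:ℝ))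
      (by simpa using by linarith : w2 + Δ ∈ Set.Ici (0:ℝ)) (by linarith)
  refine intervalIntegral.integral_mono_on hcd hint.intervalIntegrable
    (intg hm hc (hc.trans hcd)) (fun w hw => ?_)
  have hw0 : (0:ℝ) ≤ w := hc.trans hw.1
  exact hm (by simpa using hw0) (by simpa using by linarith : w + Δ ∈ Set.Ici (0:ℝ)) (by linarith)

lemma Jeq (x : ℝ → ℝ) (r t₀ : ℝ) :
    (∫ u in t₀..r, x (r - t₀ + u)) = ∫ w in r..(2*r - t₀), x w := by
  rw [intervalIntegral.integral_comp_add_left x (r - t₀),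
    show r - t₀ + t₀ = r by ring, show r - t₀ + r = 2*r - t₀ by ring]

lemma claimA {x : ℝ → ℝ} (hm : AntitoneOn x (Set.Ici 0)) {b t₀ s t : ℝ}
    (hxb : ∀ s, 0 ≤ s → x s ≤ b) (h0 : 0 ≤ t₀) (h1 : t₀ ≤ s) (h2 : s ≤ t) :
    (∫ w in t..(2*t - t₀), x w) ≤ (∫ w in s..(2*s - t₀), x w) + b * (t - s) := by
  have hs0 : (0:ℝ) ≤ s := h0.trans h1
  have ht0 : (0:ℝ) ≤ t := hs0.trans h2
  have hp0 : (0:ℝ) ≤ s + t - t₀ := by linarith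
  have hsplit : (∫ w in t..(s + t - t₀), x w) + (∫ w in (s + t - t₀)..(2*t - t₀), x w)
      = ∫ w in t..(2*t - t₀), x w :=
    intervalIntegral.integral_add_adjacent_intervals (intg hm ht0 hp0)
      (intg hm hp0 (by linarith))
  have hA : (∫ w in t..(s + t - t₀), x w) ≤ ∫ w in s..(2*s - t₀), x w := by
    have := shift_le hm (Δ := t - s) hs0 (show s ≤ 2*s - t₀ by linarith) (by linarith)
    rwa [show s + (t - s) = t by ring, show 2*s - t₀ + (t - s) = s + t - t₀ by ring] at this
  have hB : (∫ w in (s + t - t₀)..(2*t - t₀), x w) ≤ b * (t - s) := by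
    have := int_le_const hm hxb hp0 (show s + t - t₀ ≤ 2*t - t₀ by linarith)
    calc (∫ w in (s + t - t₀)..(2*t - t₀), x w) ≤ b * (2*t - t₀ - (s + t - t₀)) := this
      _ = b * (t - s) := by ring
  linarith

lemma claimB {x : ℝ → ℝ} (hm : AntitoneOn x (Set.Ici 0)) {a b t₀ s t : ℝ}
    (hxa : ∀ s, 0 ≤ s → a ≤ x s) (hxb : ∀ s, 0 ≤ s → x s ≤ b)
    (h0 : 0 ≤ t₀) (h1 : t₀ ≤ s) (h2 : s ≤ t) :
    (∫ w in s..(2*s - t₀), x w) ≤ (∫ w in t..(2*t - t₀), x w) + (b - 2*a) * (t - s) := by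
  have hs0 : (0:ℝ) ≤ s := h0.trans h1
  have ht0 : (0:ℝ) ≤ t := hs0.trans h2
  have h2s : (0:ℝ) ≤ 2*s - t₀ := by linarith
  have hp0 : (0:ℝ) ≤ s + t - t₀ := by linarith
  have add1 : (∫ w in s..(2*s - t₀), x w) + (∫ w in (2*s - t₀)..(s + t - t₀), x w)
      = ∫ w in s..(s + t - t₀), x w :=
    intervalIntegral.integral_add_adjacent_intervals (intg hm hs0 h2s) (intg hm h2s hp0)
  have add2 : (∫ w in s..t, x w) + (∫ w in t..(s + t - t₀), x w)
      = ∫ w in s..(s + t - t₀), x w :=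
    intervalIntegral.integral_add_adjacent_intervals (intg hm hs0 ht0) (intg hm ht0 hp0)
  have add3 : (∫ w in t..(s + t - t₀), x w) + (∫ w in (s + t - t₀)..(2*t - t₀), x w)
      = ∫ w in t..(2*t - t₀), x w :=
    intervalIntegral.integral_add_adjacent_intervals (intg hm ht0 hp0)
      (intg hm hp0 (by linarith))
  have hb1 : (∫ w in s..t, x w) ≤ b * (t - s) := int_le_const hm hxb hs0 h2
  have ha1 : a * (t - s) ≤ ∫ w in (2*s - t₀)..(s + t - t₀), x w := by
    have := const_le_int hm hxa h2s (show 2*s - t₀ ≤ s + t - t₀ by linarith)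
    calc a * (t - s) = a * (s + t - t₀ - (2*s - t₀)) := by ring
      _ ≤ _ := this
  have ha2 : a * (t - s) ≤ ∫ w in (s + t - t₀)..(2*t - t₀), x w := by
    have := const_le_int hm hxa hp0 (show s + t - t₀ ≤ 2*t - t₀ by linarith)
    calc a * (t - s) = a * (2*t - t₀ - (s + t - t₀)) := by ring
      _ ≤ _ := this
  linarith

lemma master {A B N c : ℝ} (h : A ≤ B) (hN : 1 ≤ N) (hc : 0 ≤ c) :
    Real.exp A * c ≤ N * (Real.exp B * c) := by
  have h1 : Real.exp A * c ≤ Real.exp B * c :=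
    mul_le_mul_of_nonneg_right (Real.exp_le_exp.2 h) hc
  have h2 : Real.exp B * c ≤ N * (Real.exp B * c) :=
    le_mul_of_one_le_left (by positivity) hN
  linarith

lemma nrm_coc_proj0 (y : ℝ → ℝ) (r t₀ : ℝ) (v : Fin 3 → ℝ) :
    nrm (coc y r t₀ (proj0 v)) = Real.exp (∫ u in t₀..r, y u) * |v 2| := by
  simp [nrm, coc, proj0, abs_mul, Real.abs_exp]

lemma nrm_coc_proj1 (y : ℝ → ℝ) (r t₀ : ℝ) (v : Fin 3 → ℝ) :
    nrm (coc y r t₀ (proj1 v)) = Real.exp (-(∫ u in t₀..r, y u)) * |v 0| := by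
  simp [nrm, coc, proj1, abs_mul, Real.abs_exp]

lemma nrm_coc_proj2 (y : ℝ → ℝ) (r t₀ : ℝ) (v : Fin 3 → ℝ) :
    nrm (coc y r t₀ (proj2 v)) = Real.exp (∫ u in t₀..r, y u) * |v 1| := by
  simp [nrm, coc, proj2, abs_mul, Real.abs_exp]

end Helpers

/-- The skew-evolution semiflow of the counterexample is not globally uniformly
exponentially trichotomic, but it is pointwise uniformly exponentially
trichotomic at every `x ∈ X` (with the constant projection families). -/
theorem stmt7
    (X : Set (ℝ → ℝ))
    (hXmono : ∀ x ∈ X, AntitoneOn x (Set.Ici 0))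
    (hXtr : ∀ x ∈ X, ∀ u : ℝ, 0 ≤ u → (fun τ => x (u + τ)) ∈ X)
    (hXbd : ∀ x ∈ X, ∃ n : ℕ, 0 < n ∧
      (∀ s : ℝ, 0 ≤ s → 1 / (2 * (n : ℝ) + 1) ≤ x s ∧ x s ≤ 1 / (2 * (n : ℝ))) ∧
      Tendsto x atTop (nhds (1 / (2 * (n : ℝ) + 1))))
    (hXall : ∀ n : ℕ, 0 < n → ∃ x ∈ X,
      ∀ s : ℝ, 0 ≤ s → 1 / (2 * (n : ℝ) + 1) ≤ x s ∧ x s ≤ 1 / (2 * (n : ℝ))) :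
    -- not globally uniformly exponentially trichotomic
    (¬ ∃ N₀ N₁ N₂ ν₀ ν₁ ν₂ : ℝ, 1 < N₀ ∧ 1 < N₁ ∧ 1 < N₂ ∧
      0 < ν₀ ∧ 0 < ν₁ ∧ 0 < ν₂ ∧
      ∀ x ∈ X, ∀ t t₀ : ℝ, 0 ≤ t₀ → t₀ ≤ t → ∀ v : Fin 3 → ℝ,
        (Real.exp (ν₁ * (t - t₀)) * nrm (coc x t t₀ (proj1 v)) ≤ N₁ * nrm (proj1 v)) ∧
        (Real.exp (ν₂ * (t - t₀)) * nrm (proj2 v) ≤ N₂ * nrm (coc x t t₀ (proj2 v))) ∧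
        (nrm (proj0 v) ≤ N₀ * Real.exp (ν₀ * (t - t₀)) * nrm (coc x t t₀ (proj0 v))) ∧
        (nrm (coc x t t₀ (proj0 v)) ≤
          N₀ ^ 2 * Real.exp (2 * ν₀ * (t - t₀)) * nrm (proj0 v))) ∧
    -- but pointwise uniformly exponentially trichotomic at every point
    (∀ x ∈ X, ∃ N₀ N₁ N₂ ν₀ ν₁ ν₂ : ℝ, 1 < N₀ ∧ 1 < N₁ ∧ 1 < N₂ ∧
      0 < ν₀ ∧ 0 < ν₁ ∧ 0 < ν₂ ∧
      ∀ t s t₀ : ℝ, 0 ≤ t₀ → t₀ ≤ s → s ≤ t → ∀ v : Fin 3 → ℝ,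
        (nrm (coc (orbitTranslate x s t₀) s t₀ (proj0 v)) ≤
          N₀ * Real.exp (ν₀ * (t - s)) * nrm (coc (orbitTranslate x t t₀) t t₀ (proj0 v))) ∧
        (nrm (coc (orbitTranslate x t t₀) t t₀ (proj0 v)) ≤
          N₀ * Real.exp (ν₀ * (t - s)) * nrm (coc (orbitTranslate x s t₀) s t₀ (proj0 v))) ∧
        (Real.exp (ν₁ * (t - s)) * nrm (coc (orbitTranslate x t t₀) t t₀ (proj1 v)) ≤
          N₁ * nrm (coc (orbitTranslate x s t₀) s t₀ (proj1 v))) ∧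
        (Real.exp (ν₂ * (t - s)) * nrm (coc (orbitTranslate x s t₀) s t₀ (proj2 v)) ≤
          N₂ * nrm (coc (orbitTranslate x t t₀) t t₀ (proj2 v)))) := by
  constructor
  · -- global trichotomy fails
    rintro ⟨N₀, N₁, N₂, ν₀, ν₁, ν₂, hN₀, hN₁, hN₂, hν₀, hν₁, hν₂, H⟩
    set n : ℕ := ⌈1/ν₁⌉₊ + 1 with hn_def
    have hn : 0 < n := Nat.succ_pos _
    have hninv : 1/ν₁ ≤ (n : ℝ) := by
      calc 1/ν₁ ≤ (⌈1/ν₁⌉₊ : ℝ) := Nat.le_ceil _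
        _ ≤ (n : ℝ) := by exact_mod_cast Nat.le_succ _
    have hnpos : (0:ℝ) < n := lt_of_lt_of_le (by positivity) hninv
    have hhalf : 1/(2*(n:ℝ)) ≤ ν₁/2 := by
      rw [div_le_div_iff₀ (by positivity) (by norm_num)]
      have : 2 ≤ ν₁ * (2 * n) := by
        have h1 : ν₁ * (1/ν₁) ≤ ν₁ * n := mul_le_mul_of_nonneg_left hninv hν₁.le
        rw [mul_one_div_cancel hν₁.ne'] at h1
        nlinarith
      linarith
    obtain ⟨x, hx, hbd⟩ := hXall n hn
    set T : ℝ := (Real.log N₁ + 1)/(ν₁/2) with hT_def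
    have hlog : 0 < Real.log N₁ := Real.log_pos hN₁
    have hT0 : 0 ≤ T := by positivity
    have h1 := (H x hx T 0 le_rfl hT0 ![1, 0, 0]).1
    rw [nrm_coc_proj1] at h1
    simp only [nrm, proj1, Matrix.cons_val_zero, Matrix.cons_val_one, Matrix.head_cons,
      Matrix.cons_val_two, Matrix.tail_cons, abs_one, abs_zero, mul_one, add_zero,
      sub_zero] at h1
    -- h1 : exp (ν₁ * T) * exp (-(∫ s in 0..T, x s)) ≤ N₁
    have hI : (∫ w in (0:ℝ)..T, x w) ≤ 1/(2*(n:ℝ)) * (T - 0) :=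
      int_le_const (hXmono x hx) (fun r hr => (hbd r hr).2) le_rfl hT0
    rw [← Real.exp_add] at h1
    have hTval : ν₁/2 * T = Real.log N₁ + 1 := by
      rw [hT_def]; field_simp
    have hexp : Real.log N₁ + 1 ≤ ν₁ * T + -(∫ w in (0:ℝ)..T, x w) := by
      have h2 : 1/(2*(n:ℝ)) * T ≤ ν₁/2 * T := mul_le_mul_of_nonneg_right hhalf hT0
      have h3 : (∫ w in (0:ℝ)..T, x w) ≤ ν₁/2 * T := by
        calc (∫ w in (0:ℝ)..T, x w) ≤ 1/(2*(n:ℝ)) * (T - 0) := hI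
          _ = 1/(2*(n:ℝ)) * T := by ring
          _ ≤ ν₁/2 * T := h2
      linarith
    have h4 : Real.exp (Real.log N₁ + 1) ≤ N₁ :=
      le_trans (Real.exp_le_exp.2 hexp) h1
    rw [Real.exp_add, Real.exp_log (by linarith : (0:ℝ) < N₁)] at h4
    nlinarith [Real.exp_one_gt_d9]
  · -- pointwise trichotomy holds
    intro x hx
    obtain ⟨n, hn, hbd, -⟩ := hXbd x hx
    have hn1 : (1:ℝ) ≤ (n:ℝ) := by exact_mod_cast hn
    set a : ℝ := 1/(2*(n:ℝ)+1) with ha_def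
    set b : ℝ := 1/(2*(n:ℝ)) with hb_def
    have ha : 0 < a := by positivity
    have hb : 0 < b := by positivity
    have hab : 0 < 2*a - b := by
      rw [sub_pos, hb_def, ha_def,
        show (2:ℝ) * (1/(2*(n:ℝ)+1)) = 2/(2*(n:ℝ)+1) by ring,
        div_lt_div_iff₀ (by positivity) (by positivity)]
      nlinarith
    have hm := hXmono x hx
    have hxa : ∀ r, 0 ≤ r → a ≤ x r := fun r hr => (hbd r hr).1
    have hxb : ∀ r, 0 ≤ r → x r ≤ b := fun r hr => (hbd r hr).2
    refine ⟨2, 2, 2, b, 2*a - b, 2*a - b, one_lt_two, one_lt_two, one_lt_two,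
      hb, hab, hab, ?_⟩
    intro t s t₀ h0 h1 h2 v
    have hA := claimA hm hxb h0 h1 h2
    have hB := claimB hm hxa hxb h0 h1 h2
    have horb_s : (∫ u in t₀..s, orbitTranslate x s t₀ u) = ∫ w in s..(2*s - t₀), x w := by
      simp only [orbitTranslate]; exact Jeq x s t₀
    have horb_t : (∫ u in t₀..t, orbitTranslate x t t₀ u) = ∫ w in t..(2*t - t₀), x w := by
      simp only [orbitTranslate]; exact Jeq x t t₀
    set Js : ℝ := ∫ w in s..(2*s - t₀), x w
    set Jt : ℝ := ∫ w in t..(2*t - t₀), x w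
    refine ⟨?_, ?_, ?_, ?_⟩
    · rw [nrm_coc_proj0, nrm_coc_proj0, horb_s, horb_t]
      calc Real.exp Js * |v 2| ≤ 2 * (Real.exp (b*(t-s) + Jt) * |v 2|) :=
            master (by nlinarith [mul_nonneg ha.le (sub_nonneg.2 h2)]) one_le_two (abs_nonneg _)
        _ = 2 * Real.exp (b*(t-s)) * (Real.exp Jt * |v 2|) := by
            rw [Real.exp_add]; ring
    · rw [nrm_coc_proj0, nrm_coc_proj0, horb_s, horb_t]
      calc Real.exp Jt * |v 2| ≤ 2 * (Real.exp (b*(t-s) + Js) * |v 2|) :=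
            master (by linarith) one_le_two (abs_nonneg _)
        _ = 2 * Real.exp (b*(t-s)) * (Real.exp Js * |v 2|) := by
            rw [Real.exp_add]; ring
    · rw [nrm_coc_proj1, nrm_coc_proj1, horb_s, horb_t]
      have heq : Real.exp ((2*a-b)*(t-s)) * (Real.exp (-Jt) * |v 0|)
          = Real.exp ((2*a-b)*(t-s) + -Jt) * |v 0| := by
        rw [Real.exp_add]; ring
      rw [heq]
      exact master (by nlinarith) one_le_two (abs_nonneg _)
    · rw [nrm_coc_proj2, nrm_coc_proj2, horb_s, horb_t]
      have heq : Real.exp ((2*a-b)*(t-s)) * (Real.exp Js * |v 1|)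
          = Real.exp ((2*a-b)*(t-s) + Js) * |v 1| := by
        rw [Real.exp_add]; ring
      rw [heq]
      exact master (by nlinarith) one_le_two (abs_nonneg _)
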